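/- Let 𝒱 ⊂ ℝ be a finite set, 𝒲 ⊆ 𝒱 nonempty with p = |𝒲| and q = |𝒱 ∖ 𝒲| ≥ 1. Let the training set be T = {(v₁,v₂) ∈ 𝒱² : v₁ ∈ 𝒲 or v₂ ∈ 𝒲} with targets y(v₁,v₂) = v₁ + v₂. Let κ₀, κ₁, κ₂ ∈ ℝ, set δ₁ = κ₁ − κ₀ and δ₂ = κ₂ − κ₀, assume (p−2)δ₁ + δ₂ ≠ 0, and define the kernel K((v₁,v₂),(v₁',v₂')) = κ_k where k = #{i ∈ {1,2} : v_i = v_i'}. Suppose a : T → ℝ is symmetric (a(v₁,v₂) = a(v₂,v₁)) and satisfies Σ_{t'∈T} a(t') K(t,t') = y(t) for all t ∈ T. Then there exists a constant d ∈ ℝ (independent of the test pair) such that for every (v₁,v₂) with v₁, v₂ ∈ 𝒱 ∖ 𝒲, Σ_{t∈T} a(t) K((v₁,v₂), t) = m·(v₁ + v₂) + d, where m = p·δ₁ / ((p−2)δ₁ + δ₂). -/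
import Mathlib

open Finset

noncomputable def rowSum (T : Finset (ℝ × ℝ)) (a : ℝ × ℝ → ℝ) (v : ℝ) : ℝ :=
  ∑ t ∈ T.filter (fun t => v = t.1), a t

noncomputable def colSum (T : Finset (ℝ × ℝ)) (a : ℝ × ℝ → ℝ) (v : ℝ) : ℝ :=
  ∑ t ∈ T.filter (fun t => v = t.2), a t

lemma kernel_sum_expand (κ₀ κ₁ κ₂ δ₁ δ₂ : ℝ)
    (hδ₁ : δ₁ = κ₁ - κ₀) (hδ₂ : δ₂ = κ₂ - κ₀)
    (K : ℝ × ℝ → ℝ × ℝ → ℝ)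
    (hK : ∀ s t : ℝ × ℝ, K s t =
      if s.1 = t.1 then (if s.2 = t.2 then κ₂ else κ₁)
      else (if s.2 = t.2 then κ₁ else κ₀))
    (T : Finset (ℝ × ℝ)) (a : ℝ × ℝ → ℝ) (s : ℝ × ℝ) :
    ∑ t ∈ T, a t * K s t
      = κ₀ * (∑ t ∈ T, a t) + δ₁ * rowSum T a s.1 + δ₁ * colSum T a s.2
        + (δ₂ - 2*δ₁) * ∑ t ∈ T.filter (fun t => s.1 = t.1 ∧ s.2 = t.2), a t := by
  have key : ∀ t ∈ T, a t * K s t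
      = κ₀ * a t + (if s.1 = t.1 then δ₁ * a t else 0)
        + (if s.2 = t.2 then δ₁ * a t else 0)
        + (if s.1 = t.1 ∧ s.2 = t.2 then (δ₂ - 2*δ₁) * a t else 0) := by
    intro t _
    rw [hK]
    subst hδ₁ hδ₂
    by_cases h1 : s.1 = t.1 <;> by_cases h2 : s.2 = t.2 <;>
      simp [h1, h2] <;> ring
  rw [Finset.sum_congr rfl key]
  simp only [Finset.sum_add_distrib, rowSum, colSum, Finset.sum_filter,
    Finset.mul_sum, mul_ite, mul_zero]

theorem symbolic_addition_affine_form
    (V W : Finset ℝ) (hWV : W ⊆ V) (hWne : W.Nonempty)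
    (p q : ℕ) (hp : p = W.card) (hq : q = (V \ W).card) (hq1 : 1 ≤ q)
    (κ₀ κ₁ κ₂ δ₁ δ₂ : ℝ) (hδ₁ : δ₁ = κ₁ - κ₀) (hδ₂ : δ₂ = κ₂ - κ₀)
    (hden : ((p : ℝ) - 2) * δ₁ + δ₂ ≠ 0)
    (K : ℝ × ℝ → ℝ × ℝ → ℝ)
    (hK : ∀ s t : ℝ × ℝ, K s t =
      if s.1 = t.1 then (if s.2 = t.2 then κ₂ else κ₁)
      else (if s.2 = t.2 then κ₁ else κ₀))
    (T : Finset (ℝ × ℝ)) (hT : T = (V ×ˢ V).filter fun t => t.1 ∈ W ∨ t.2 ∈ W)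
    (a : ℝ × ℝ → ℝ) (hsym : ∀ v₁ v₂ : ℝ, a (v₁, v₂) = a (v₂, v₁))
    (hinterp : ∀ t ∈ T, ∑ t' ∈ T, a t' * K t t' = t.1 + t.2) :
    ∃ d : ℝ, ∀ v₁ ∈ V \ W, ∀ v₂ ∈ V \ W,
      ∑ t ∈ T, a t * K (v₁, v₂) t
        = ((p : ℝ) * δ₁ / (((p : ℝ) - 2) * δ₁ + δ₂)) * (v₁ + v₂) + d := by
  classical
  have hTmem : ∀ t : ℝ × ℝ, t ∈ T ↔ t.1 ∈ V ∧ t.2 ∈ V ∧ (t.1 ∈ W ∨ t.2 ∈ W) := by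
    intro t; rw [hT]; simp [Finset.mem_filter, Finset.mem_product, and_assoc]
  set A := ∑ t ∈ T, a t with hA
  set D := ((p : ℝ) - 2) * δ₁ + δ₂ with hD
  set σW := ∑ w ∈ W, w with hσ
  set CW := ∑ w ∈ W, colSum T a w with hCW
  set RW := ∑ w ∈ W, rowSum T a w with hRW
  -- row filter identification for v ∉ W
  have hrowset : ∀ v ∈ V \ W, T.filter (fun t => v = t.1) = {v} ×ˢ W := by
    intro v hv
    rw [Finset.mem_sdiff] at hv
    ext t
    simp only [Finset.mem_filter, hTmem, Finset.mem_product, Finset.mem_singleton]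
    constructor
    · rintro ⟨⟨h1, h2, h3⟩, rfl⟩
      exact ⟨rfl, h3.resolve_left hv.2⟩
    · rintro ⟨h1, h2⟩
      exact ⟨⟨h1 ▸ hv.1, hWV h2, Or.inr h2⟩, h1.symm⟩
  have hcolset : ∀ v ∈ V \ W, T.filter (fun t => v = t.2) = W ×ˢ {v} := by
    intro v hv
    rw [Finset.mem_sdiff] at hv
    ext t
    simp only [Finset.mem_filter, hTmem, Finset.mem_product, Finset.mem_singleton]
    constructor
    · rintro ⟨⟨h1, h2, h3⟩, rfl⟩
      exact ⟨h3.resolve_right hv.2, rfl⟩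
    · rintro ⟨h1, h2⟩
      exact ⟨⟨hWV h1, h2 ▸ hv.1, Or.inl h1⟩, h2.symm⟩
  have hrowW : ∀ v ∈ V \ W, rowSum T a v = ∑ w ∈ W, a (v, w) := by
    intro v hv
    rw [rowSum, hrowset v hv, Finset.sum_product, Finset.sum_singleton]
  have hcolW : ∀ v ∈ V \ W, colSum T a v = ∑ w ∈ W, a (w, v) := by
    intro v hv
    rw [colSum, hcolset v hv, Finset.sum_product_right, Finset.sum_singleton]
  -- both-match filter facts
  have hempty : ∀ v₁ ∈ V \ W, ∀ v₂ ∈ V \ W,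
      T.filter (fun t : ℝ × ℝ => v₁ = t.1 ∧ v₂ = t.2) = ∅ := by
    intro v₁ h₁ v₂ h₂
    rw [Finset.mem_sdiff] at h₁ h₂
    rw [Finset.filter_eq_empty_iff]
    rintro t ht ⟨rfl, rfl⟩
    rcases (hTmem t).1 ht with ⟨-, -, h | h⟩
    · exact h₁.2 h
    · exact h₂.2 h
  have hsingle : ∀ v ∈ V \ W, ∀ w ∈ W,
      T.filter (fun t : ℝ × ℝ => v = t.1 ∧ w = t.2) = {(v, w)} := by
    intro v hv w hw
    rw [Finset.mem_sdiff] at hv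
    ext t
    simp only [Finset.mem_filter, Finset.mem_singleton]
    constructor
    · rintro ⟨-, rfl, rfl⟩; rfl
    · rintro rfl
      exact ⟨(hTmem _).2 ⟨hv.1, hWV hw, Or.inr hw⟩, rfl, rfl⟩
  have hsingle' : ∀ v ∈ V \ W, ∀ w ∈ W,
      T.filter (fun t : ℝ × ℝ => w = t.1 ∧ v = t.2) = {(w, v)} := by
    intro v hv w hw
    rw [Finset.mem_sdiff] at hv
    ext t
    simp only [Finset.mem_filter, Finset.mem_singleton]
    constructor
    · rintro ⟨-, rfl, rfl⟩; rfl
    · rintro rfl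
      exact ⟨(hTmem _).2 ⟨hWV hw, hv.1, Or.inl hw⟩, rfl, rfl⟩
  -- training equations
  have htrain : ∀ v ∈ V \ W, ∀ w ∈ W,
      κ₀ * A + δ₁ * rowSum T a v + δ₁ * colSum T a w + (δ₂ - 2*δ₁) * a (v, w)
        = v + w := by
    intro v hv w hw
    have hmem : (v, w) ∈ T := by
      rw [Finset.mem_sdiff] at hv
      exact (hTmem _).2 ⟨hv.1, hWV hw, Or.inr hw⟩
    have := hinterp (v, w) hmem
    rwa [kernel_sum_expand κ₀ κ₁ κ₂ δ₁ δ₂ hδ₁ hδ₂ K hK T a (v, w),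
      hsingle v hv w hw, Finset.sum_singleton] at this
  have htrain' : ∀ v ∈ V \ W, ∀ w ∈ W,
      κ₀ * A + δ₁ * rowSum T a w + δ₁ * colSum T a v + (δ₂ - 2*δ₁) * a (w, v)
        = w + v := by
    intro v hv w hw
    have hmem : (w, v) ∈ T := by
      rw [Finset.mem_sdiff] at hv
      exact (hTmem _).2 ⟨hWV hw, hv.1, Or.inl hw⟩
    have := hinterp (w, v) hmem
    rwa [kernel_sum_expand κ₀ κ₁ κ₂ δ₁ δ₂ hδ₁ hδ₂ K hK T a (w, v),
      hsingle' v hv w hw, Finset.sum_singleton] at this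
  -- affine formulas for row and column sums
  have hrowval : ∀ v ∈ V \ W,
      D * rowSum T a v = p * v + (σW - p * (κ₀ * A) - δ₁ * CW) := by
    intro v hv
    have hR0 : ∑ w ∈ W, (v + w) = (p : ℝ) * v + σW := by
      rw [Finset.sum_add_distrib, Finset.sum_const, nsmul_eq_mul, hσ, hp]
    have hsum := Finset.sum_congr rfl (fun w hw => htrain v hv w hw)
    rw [hR0] at hsum
    simp only [Finset.sum_add_distrib, Finset.sum_const, nsmul_eq_mul,
      ← Finset.mul_sum] at hsum
    rw [← hrowW v hv, ← hCW, ← hp] at hsum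
    rw [hD]
    linear_combination hsum
  have hcolval : ∀ v ∈ V \ W,
      D * colSum T a v = p * v + (σW - p * (κ₀ * A) - δ₁ * RW) := by
    intro v hv
    have hR0 : ∑ w ∈ W, (w + v) = σW + (p : ℝ) * v := by
      rw [Finset.sum_add_distrib, Finset.sum_const, nsmul_eq_mul, hσ, hp]
    have hsum := Finset.sum_congr rfl (fun w hw => htrain' v hv w hw)
    rw [hR0] at hsum
    simp only [Finset.sum_add_distrib, Finset.sum_const, nsmul_eq_mul,
      ← Finset.mul_sum] at hsum
    rw [← hcolW v hv, ← hRW, ← hp] at hsum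
    rw [hD]
    linear_combination hsum
  refine ⟨κ₀ * A + δ₁ * ((σW - p * (κ₀ * A) - δ₁ * CW)
      + (σW - p * (κ₀ * A) - δ₁ * RW)) / D, ?_⟩
  intro v₁ h₁ v₂ h₂
  rw [kernel_sum_expand κ₀ κ₁ κ₂ δ₁ δ₂ hδ₁ hδ₂ K hK T a (v₁, v₂),
    hempty v₁ h₁ v₂ h₂, Finset.sum_empty]
  have hDne : D ≠ 0 := hden
  have hr : rowSum T a v₁ = (↑p * v₁ + (σW - ↑p * (κ₀ * A) - δ₁ * CW)) / D := by
    rw [eq_div_iff hDne, mul_comm]; exact hrowval v₁ h₁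
  have hc : colSum T a v₂ = (↑p * v₂ + (σW - ↑p * (κ₀ * A) - δ₁ * RW)) / D := by
    rw [eq_div_iff hDne, mul_comm]; exact hcolval v₂ h₂
  rw [← hA, hr, hc]
  field_simp
  ring
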